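/- (Desnanot–Jacobi identity, general rows/columns k < l) For an n×n matrix A and indices 1 ≤ k < l ≤ n: det A · det A^{k,l}_{k,l} = det A^{l}_{l} · det A^{k}_{k} − det A^{l}_{k} · det A^{k}_{l}, where A^{S}_{T} denotes the matrix obtained from A by deleting the rows in S and columns in T. -/

import Mathlib

open Matrix Finset

section Aux

variable {R : Type*} [CommRing R]

private lemma perm_classify {m : Type*} [DecidableEq m] {k l : m} (hkl : k ≠ l)
    (σ : Equiv.Perm m) (h : ∀ j, j ≠ k → j ≠ l → σ j = j) :
    σ = 1 ∨ σ = Equiv.swap k l := by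
  have hmem : ∀ x : m, x = k ∨ x = l → σ x = k ∨ σ x = l := by
    intro x hx
    by_contra hc
    push_neg at hc
    have h1 : σ (σ x) = σ x := h (σ x) hc.1 hc.2
    have h2 : σ x = x := σ.injective h1
    rcases hx with rfl | rfl
    · exact hc.1 h2
    · exact hc.2 h2
  rcases hmem k (Or.inl rfl) with hk | hk
  · left
    have hl : σ l = l := by
      rcases hmem l (Or.inr rfl) with h1 | h1
      · exact absurd (σ.injective (h1.trans hk.symm)) (Ne.symm hkl)
      · exact h1
    ext x
    by_cases hxk : x = k
    · simpa [hxk] using hk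
    by_cases hxl : x = l
    · simpa [hxl] using hl
    · simpa using h x hxk hxl
  · right
    have hl : σ l = k := by
      rcases hmem l (Or.inr rfl) with h1 | h1
      · exact h1
      · exact absurd (σ.injective (h1.trans hk.symm)) (Ne.symm hkl)
    ext x
    by_cases hxk : x = k
    · subst hxk; simpa [Equiv.swap_apply_left] using hk
    by_cases hxl : x = l
    · subst hxl; simpa [Equiv.swap_apply_right] using hl
    · rw [Equiv.swap_apply_of_ne_of_ne hxk hxl]
      simpa using h x hxk hxl

private lemma det_two_columns {m : Type*} [DecidableEq m] [Fintype m]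
    (M : Matrix m m R) {k l : m} (hkl : k ≠ l)
    (h : ∀ i j, j ≠ k → j ≠ l → M i j = if i = j then 1 else 0) :
    M.det = M k k * M l l - M l k * M k l := by
  classical
  have hswap : (1 : Equiv.Perm m) ≠ Equiv.swap k l := by
    intro h1
    have := congrArg (fun e : Equiv.Perm m => e k) h1
    simp only [Equiv.Perm.one_apply, Equiv.swap_apply_left] at this
    exact hkl this
  rw [Matrix.det_apply]
  rw [← Finset.sum_subset (Finset.subset_univ ({1, Equiv.swap k l} : Finset (Equiv.Perm m)))
      (fun σ _ hσ => ?_)]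
  · rw [Finset.sum_insert (by simpa using hswap), Finset.sum_singleton]
    have h1 : (∏ i, M ((1 : Equiv.Perm m) i) i) = M k k * M l l := by
      simp only [Equiv.Perm.one_apply]
      rw [← Finset.prod_subset (Finset.subset_univ ({k, l} : Finset m))
        (fun x _ hx => ?_)]
      · rw [Finset.prod_insert (by simpa using hkl), Finset.prod_singleton]
      · simp only [Finset.mem_insert, Finset.mem_singleton, not_or] at hx
        simp [h x x hx.1 hx.2]
    have h2 : (∏ i, M (Equiv.swap k l i) i) = M l k * M k l := by
      rw [← Finset.prod_subset (Finset.subset_univ ({k, l} : Finset m))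
        (fun x _ hx => ?_)]
      · rw [Finset.prod_insert (by simpa using hkl), Finset.prod_singleton,
          Equiv.swap_apply_left, Equiv.swap_apply_right]
      · simp only [Finset.mem_insert, Finset.mem_singleton, not_or] at hx
        rw [Equiv.swap_apply_of_ne_of_ne hx.1 hx.2]
        simp [h x x hx.1 hx.2]
    rw [h1, h2, Equiv.Perm.sign_swap hkl]
    simp [sub_eq_add_neg]
  · -- vanishing terms
    simp only [Finset.mem_insert, Finset.mem_singleton, not_or] at hσ
    have : ¬ (∀ j, j ≠ k → j ≠ l → σ j = j) := by
      intro hh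
      rcases perm_classify hkl σ hh with h1 | h1
      · exact hσ.1 h1
      · exact hσ.2 h1
    push_neg at this
    obtain ⟨j, hjk, hjl, hj⟩ := this
    have : (∏ i, M (σ i) i) = 0 :=
      Finset.prod_eq_zero (Finset.mem_univ j) (by rw [h (σ j) j hjk hjl, if_neg hj])
    rw [this, smul_zero]

private lemma det_updateColumn_single {n : ℕ} (M : Matrix (Fin (n + 1)) (Fin (n + 1)) R)
    (i j : Fin (n + 1)) :
    (M.updateCol j (Pi.single i 1)).det =
      (-1) ^ (j + i : ℕ) * (M.submatrix i.succAbove j.succAbove).det := by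
  rw [← Matrix.det_transpose, ← Matrix.updateRow_transpose, ← Matrix.adjugate_apply,
    Matrix.adjugate_fin_succ_eq_det_submatrix]
  congr 1
  rw [← Matrix.det_transpose]
  rfl

private lemma submatrix_updateColumn {m m' o o' : Type*} [DecidableEq m] [DecidableEq m']
    (M : Matrix o m R) (f : o' → o) (g : m' → m) (hg : Function.Injective g)
    (j₀ : m') (c : m) (hj : g j₀ = c) (v : o → R) :
    (M.updateCol c v).submatrix f g = (M.submatrix f g).updateCol j₀ (fun i => v (f i)) := by
  ext i j
  simp only [Matrix.submatrix_apply, Matrix.updateCol_apply]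
  by_cases hjj : j = j₀
  · subst hjj; simp [hj]
  · rw [if_neg hjj, if_neg]
    intro hc
    exact hjj (hg (hc.trans hj.symm))

private lemma det_updateColumn_updateColumn_smul {m : Type*} [DecidableEq m] [Fintype m]
    (M : Matrix m m R) {k l : m} (hkl : k ≠ l) (s : R) (u v : m → R) :
    ((M.updateCol k (s • u)).updateCol l v).det =
      s * ((M.updateCol k u).updateCol l v).det := by
  have hcomm : ∀ w : m → R,
      (M.updateCol k w).updateCol l v = (M.updateCol l v).updateCol k w := by
    intro w
    ext i j
    simp only [Matrix.updateCol_apply]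
    rcases eq_or_ne j l with rfl | h1
    · simp [Ne.symm hkl]
    · rcases eq_or_ne j k with rfl | h2
      · simp [h1, hkl]
      · simp [h1, h2]
  rw [hcomm, hcomm, Matrix.det_updateCol_smul]

/-- The Desnanot–Jacobi identity multiplied by `det A`, valid over any commutative ring. -/
private lemma dj_mul {n : ℕ} (A : Matrix (Fin (n + 2)) (Fin (n + 2)) R)
    (k l : Fin (n + 2)) (hkl : k < l) :
    A.det * (A.det *
        (A.submatrix
          (fun i : Fin n =>
            l.succAbove ((⟨k.val, Nat.lt_of_lt_of_le hkl (Nat.lt_succ_iff.mp l.isLt)⟩ :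
              Fin (n + 1)).succAbove i))
          (fun j : Fin n =>
            l.succAbove ((⟨k.val, Nat.lt_of_lt_of_le hkl (Nat.lt_succ_iff.mp l.isLt)⟩ :
              Fin (n + 1)).succAbove j))).det) =
      A.det * ((A.submatrix l.succAbove l.succAbove).det *
          (A.submatrix k.succAbove k.succAbove).det -
        (A.submatrix l.succAbove k.succAbove).det *
          (A.submatrix k.succAbove l.succAbove).det) := by
  classical
  have hkl' : k ≠ l := ne_of_lt hkl
  set k' : Fin (n + 1) := ⟨k.val, Nat.lt_of_lt_of_le hkl (Nat.lt_succ_iff.mp l.isLt)⟩ with hk'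
  have hsk : l.succAbove k' = k := by
    rw [Fin.succAbove_of_castSucc_lt]
    · exact Fin.ext rfl
    · exact hkl
  -- the auxiliary matrix B
  set B : Matrix (Fin (n + 2)) (Fin (n + 2)) R :=
    ((1 : Matrix (Fin (n + 2)) (Fin (n + 2)) R).updateCol k
        (fun i => adjugate A i k)).updateCol l (fun i => adjugate A i l) with hB
  have hBdet : B.det = adjugate A k k * adjugate A l l - adjugate A l k * adjugate A k l := by
    have := det_two_columns B hkl' (fun i j hjk hjl => by
      simp [hB, Matrix.updateCol_apply, hjk, hjl, Matrix.one_apply])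
    simpa [hB, Matrix.updateCol_apply, hkl', hkl'.symm] using this
  have hAB : A * B = (A.updateCol k (A.det • (Pi.single k 1 : Fin (n + 2) → R))).updateCol l
      (A.det • (Pi.single l 1 : Fin (n + 2) → R)) := by
    ext i j
    by_cases hjl : j = l
    · subst hjl
      simp only [Matrix.mul_apply, hB, Matrix.updateCol_apply, if_pos rfl,
        Matrix.updateCol_self]
      have := congrFun (congrFun (Matrix.mul_adjugate A) i) j
      simpa [Matrix.mul_apply, Matrix.one_apply, Pi.single_apply, Matrix.smul_apply] using this
    · by_cases hjk : j = k
      · subst hjk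
        simp only [Matrix.mul_apply, hB, Matrix.updateCol_apply, if_neg hjl, if_pos rfl]
        have := congrFun (congrFun (Matrix.mul_adjugate A) i) j
        simpa [Matrix.mul_apply, Matrix.one_apply, Pi.single_apply, Matrix.smul_apply,
          hjl, hkl'] using this
      · simp only [Matrix.mul_apply, hB, Matrix.updateCol_apply, if_neg hjl, if_neg hjk]
        rw [Finset.sum_eq_single j (fun m _ hm => by simp [Matrix.one_apply, hm]) (by simp)]
        simp [Matrix.one_apply]
  -- compute det (A * B)
  have hdetD :
      ((A.updateCol k (Pi.single k 1 : Fin (n + 2) → R)).updateCol l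
          (Pi.single l 1 : Fin (n + 2) → R)).det =
        (A.submatrix
          (fun i : Fin n => l.succAbove (k'.succAbove i))
          (fun j : Fin n => l.succAbove (k'.succAbove j))).det := by
    rw [det_updateColumn_single _ l l]
    rw [submatrix_updateColumn A l.succAbove l.succAbove
      (Fin.succAbove_right_injective) k' k hsk (Pi.single k 1 : Fin (n + 2) → R)]
    have hfun : (fun i : Fin (n + 1) => (Pi.single k 1 : Fin (n + 2) → R) (l.succAbove i)) =
        (Pi.single k' 1 : Fin (n + 1) → R) := by
      ext i
      rw [Pi.single_apply, Pi.single_apply]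
      congr 1
      simp only [eq_iff_iff]
      constructor
      · intro h; exact Fin.succAbove_right_injective (h.trans hsk.symm)
      · intro h; rw [h, hsk]
    rw [hfun, det_updateColumn_single _ k' k']
    rw [Matrix.submatrix_submatrix]
    have e1 : (-1 : R) ^ (l + l : ℕ) = 1 := Even.neg_one_pow ⟨l, rfl⟩
    have e2 : (-1 : R) ^ (k' + k' : ℕ) = 1 := Even.neg_one_pow ⟨k', rfl⟩
    rw [e1, e2, one_mul, one_mul]
    rfl
  have hmain : A.det * B.det = A.det * (A.det *
      (A.submatrix
        (fun i : Fin n => l.succAbove (k'.succAbove i))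
        (fun j : Fin n => l.succAbove (k'.succAbove j))).det) := by
    rw [← Matrix.det_mul, hAB, Matrix.det_updateCol_smul,
      det_updateColumn_updateColumn_smul A hkl', hdetD]
  -- rewrite det B in terms of minors
  have hadj : ∀ i j : Fin (n + 2), adjugate A i j =
      (-1) ^ (j + i : ℕ) * (A.submatrix j.succAbove i.succAbove).det :=
    Matrix.adjugate_fin_succ_eq_det_submatrix A
  rw [hBdet] at hmain
  rw [← hmain, hadj, hadj, hadj, hadj]
  have s1 : (-1 : R) ^ (k + k : ℕ) * (-1 : R) ^ (l + l : ℕ) = 1 := by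
    rw [Even.neg_one_pow ⟨k, rfl⟩, Even.neg_one_pow ⟨l, rfl⟩, one_mul]
  have s2 : (-1 : R) ^ (k + l : ℕ) * (-1 : R) ^ (l + k : ℕ) = 1 := by
    rw [← pow_add]
    exact Even.neg_one_pow ⟨k + l, by ring⟩
  have e1 : (-1 : R) ^ (k + k : ℕ) = 1 := Even.neg_one_pow ⟨k, rfl⟩
  have e2 : (-1 : R) ^ (l + l : ℕ) = 1 := Even.neg_one_pow ⟨l, rfl⟩
  rw [e1, e2, one_mul, one_mul]
  linear_combination (-(A.det * (A.submatrix k.succAbove l.succAbove).det *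
    (A.submatrix l.succAbove k.succAbove).det)) * s2

end Aux

/-- Desnanot–Jacobi identity for general row/column indices `k < l`. -/
theorem desnanot_jacobi
    {R : Type*} [CommRing R] (n : ℕ)
    (A : Matrix (Fin (n + 2)) (Fin (n + 2)) R)
    (k l : Fin (n + 2)) (hkl : k < l) :
    A.det *
        (A.submatrix
          (fun i : Fin n =>
            l.succAbove ((⟨k.val, Nat.lt_of_lt_of_le hkl (Nat.lt_succ_iff.mp l.isLt)⟩ :
              Fin (n + 1)).succAbove i))
          (fun j : Fin n =>
            l.succAbove ((⟨k.val, Nat.lt_of_lt_of_le hkl (Nat.lt_succ_iff.mp l.isLt)⟩ :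
              Fin (n + 1)).succAbove j))).det =
      (A.submatrix l.succAbove l.succAbove).det *
          (A.submatrix k.succAbove k.succAbove).det -
        (A.submatrix l.succAbove k.succAbove).det *
          (A.submatrix k.succAbove l.succAbove).det := by
  classical
  set S := MvPolynomial (Fin (n + 2) × Fin (n + 2)) ℤ with hS
  set X : Matrix (Fin (n + 2)) (Fin (n + 2)) S :=
    Matrix.of (fun i j => MvPolynomial.X (i, j)) with hX
  have hXdet : X.det ≠ 0 := by
    intro h0
    have h1 := congrArg
      (MvPolynomial.eval (fun p : Fin (n + 2) × Fin (n + 2) => if p.1 = p.2 then (1 : ℤ) else 0))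
      h0
    rw [RingHom.map_det] at h1
    have h2 : (MvPolynomial.eval
        (fun p : Fin (n + 2) × Fin (n + 2) => if p.1 = p.2 then (1 : ℤ) else 0)).mapMatrix X =
        (1 : Matrix (Fin (n + 2)) (Fin (n + 2)) ℤ) := by
      ext i j
      simp [hX, Matrix.one_apply, RingHom.mapMatrix_apply]
    rw [h2, Matrix.det_one] at h1
    simpa using h1
  have hgen := dj_mul X k l hkl
  have hcancel := mul_left_cancel₀ hXdet hgen
  let φ : S →+* R := MvPolynomial.eval₂Hom (Int.castRingHom R) (fun p => A p.1 p.2)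
  have hφX : X.map φ = A := by
    ext i j
    simp only [hX, Matrix.map_apply, Matrix.of_apply]
    exact MvPolynomial.eval₂Hom_X' _ _ _
  have hfinal := congrArg φ hcancel
  simp only [_root_.map_mul, map_sub, RingHom.map_det, RingHom.mapMatrix_apply,
    ← Matrix.submatrix_map, hφX] at hfinal
  exact hfinal
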